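/- Let D₀ be a fundamental discriminant with gcd(D₀,N)=1 and Q = [a,b,c] with N ∣ a. Then the extended genus character satisfies χ_{D₀}(Q|W_N) = (D₀/N)·χ_{D₀}(Q), where (·/·) is the Kronecker symbol and Q|W_N = [cN, −b, a/N]. -/

import Mathlib

/-- A fundamental discriminant. -/
def IsFundamentalDiscriminant (D : ℤ) : Prop :=
  (D % 4 = 1 ∧ Squarefree D) ∨
  (D % 4 = 0 ∧ Squarefree (D / 4) ∧ (D / 4 % 4 = 2 ∨ D / 4 % 4 = 3))

/-- The Kronecker symbol `(a/2)`. -/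
def kron2 (a : ℤ) : ℤ :=
  if a % 2 = 0 then 0 else if a % 8 = 1 ∨ a % 8 = 7 then 1 else -1

/-- The Kronecker symbol `(a/n)`, via the Jacobi symbol for the odd part. -/
def kronecker (a n : ℤ) : ℤ :=
  if n = 0 then (if a = 1 ∨ a = -1 then 1 else 0)
  else
    (if n < 0 ∧ a < 0 then -1 else 1) *
      kron2 a ^ (n.natAbs.factorization 2) *
      jacobiSym a (n.natAbs / 2 ^ (n.natAbs.factorization 2))

/-- gcd of four integers. -/
def gcd4 (a b c d : ℤ) : ℕ :=
  Nat.gcd (Nat.gcd a.natAbs b.natAbs) (Nat.gcd c.natAbs d.natAbs)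

def IsGenusChar (D₀ : ℤ) (χ : ℤ × ℤ × ℤ → ℤ) : Prop :=
  ∀ a b c : ℤ, D₀ ∣ b ^ 2 - 4 * a * c →
    ((1 < gcd4 a b c D₀ → χ (a, b, c) = 0) ∧
     (gcd4 a b c D₀ = 1 →
       ∀ r : ℤ, (∃ x y : ℤ, a * x ^ 2 + b * x * y + c * y ^ 2 = r) →
         Int.gcd r D₀ = 1 → χ (a, b, c) = kronecker D₀ r))

lemma kronecker_one_left (n : ℤ) : kronecker 1 n = 1 := by
  unfold kronecker kron2
  split
  · norm_num
  · norm_num [jacobiSym.one_left]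

lemma kron_mul (D n r : ℤ) (hn : 0 < n) (hr : r ≠ 0) :
    kronecker D (n * r) = kronecker D n * kronecker D r := by
  have hn0 : n ≠ 0 := hn.ne'
  have hnr : n * r ≠ 0 := mul_ne_zero hn0 hr
  have hna : n.natAbs ≠ 0 := Int.natAbs_ne_zero.mpr hn0
  have hra : r.natAbs ≠ 0 := Int.natAbs_ne_zero.mpr hr
  rw [kronecker, kronecker, kronecker, if_neg hnr, if_neg hn0, if_neg hr]
  rw [Int.natAbs_mul, Nat.factorization_mul hna hra]
  simp only [Finsupp.add_apply]
  have h1 : (2:ℕ)^(n.natAbs.factorization 2) ∣ n.natAbs := Nat.ordProj_dvd _ _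
  have h2 : (2:ℕ)^(r.natAbs.factorization 2) ∣ r.natAbs := Nat.ordProj_dvd _ _
  have hdiv : n.natAbs * r.natAbs /
      2 ^ (n.natAbs.factorization 2 + r.natAbs.factorization 2) =
      (n.natAbs / 2 ^ (n.natAbs.factorization 2)) *
        (r.natAbs / 2 ^ (r.natAbs.factorization 2)) := by
    rw [pow_add]; exact (Nat.div_mul_div_comm h1 h2).symm
  rw [hdiv]
  haveI : NeZero (n.natAbs / 2 ^ (n.natAbs.factorization 2)) :=
    ⟨(Nat.ordCompl_pos 2 hna).ne'⟩
  haveI : NeZero (r.natAbs / 2 ^ (r.natAbs.factorization 2)) :=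
    ⟨(Nat.ordCompl_pos 2 hra).ne'⟩
  rw [jacobiSym.mul_right]
  have hs : (n * r < 0 ∧ D < 0) ↔ (r < 0 ∧ D < 0) := by
    constructor
    · rintro ⟨h, hD⟩
      exact ⟨by nlinarith, hD⟩
    · rintro ⟨h, hD⟩
      exact ⟨mul_neg_of_pos_of_neg hn h, hD⟩
  have hs2 : ¬ (n < 0 ∧ D < 0) := fun h => absurd hn (by linarith [h.1])
  rw [if_neg hs2]
  by_cases h : r < 0 ∧ D < 0
  · rw [if_pos (hs.mpr h), if_pos h]; rw [pow_add]; ring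
  · rw [if_neg (fun hh => h (hs.mp hh)), if_neg h]; rw [pow_add]; ring

lemma dvd_gcd4_iff (p : ℕ) (a b c d : ℤ) :
    p ∣ gcd4 a b c d ↔ ((p:ℤ) ∣ a ∧ (p:ℤ) ∣ b ∧ (p:ℤ) ∣ c ∧ (p:ℤ) ∣ d) := by
  simp [gcd4, Nat.dvd_gcd_iff, ← Int.natCast_dvd, and_assoc]

/-- Existence of a represented value coprime to `d`. -/
lemma exists_rep_coprime (a b c d : ℤ) (hd : d ≠ 0) (h : gcd4 a b c d = 1) :
    ∃ x y : ℤ, Int.gcd (a * x ^ 2 + b * x * y + c * y ^ 2) d = 1 := by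
  classical
  set S1 : Finset ℕ := d.natAbs.primeFactors.filter (fun p => ¬ (p:ℤ) ∣ a) with hS1
  set S2 : Finset ℕ := d.natAbs.primeFactors.filter
    (fun p => (p:ℤ) ∣ a ∧ ¬ (p:ℤ) ∣ c) with hS2
  refine ⟨∏ p ∈ S2, (p:ℤ), ∏ p ∈ S1, (p:ℤ), ?_⟩
  set x : ℤ := ∏ p ∈ S2, (p:ℤ) with hx
  set y : ℤ := ∏ p ∈ S1, (p:ℤ) with hy
  set r : ℤ := a * x ^ 2 + b * x * y + c * y ^ 2 with hr
  by_contra hg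
  obtain ⟨p, hp, hpg⟩ := Nat.exists_prime_and_dvd hg
  have hpr : (p:ℤ) ∣ r := Int.natCast_dvd.mpr ((hpg.trans (Nat.gcd_dvd_left _ _)))
  have hpd : (p:ℤ) ∣ d := Int.natCast_dvd.mpr ((hpg.trans (Nat.gcd_dvd_right _ _)))
  have hppf : p ∈ d.natAbs.primeFactors :=
    Nat.mem_primeFactors.mpr ⟨hp, Int.natCast_dvd.mp hpd, Int.natAbs_ne_zero.mpr hd⟩
  have hpp : Prime (p:ℤ) := Nat.prime_iff_prime_int.mp hp
  -- p divides a prime product iff p is in the set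
  have hmem : ∀ (S : Finset ℕ), S ⊆ d.natAbs.primeFactors →
      ((p:ℤ) ∣ ∏ q ∈ S, (q:ℤ) ↔ p ∈ S) := by
    intro S hS
    rw [Prime.dvd_finset_prod_iff hpp]
    constructor
    · rintro ⟨q, hq, hdvd⟩
      have hq' : Nat.Prime q := Nat.prime_of_mem_primeFactors (hS hq)
      have hpq : p ∣ q := Int.natCast_dvd_natCast.mp hdvd
      have : p = q := (Nat.prime_dvd_prime_iff_eq hp hq').mp hpq
      exact this ▸ hq
    · intro hq; exact ⟨p, hq, dvd_refl _⟩
  have hxdvd := hmem S2 (Finset.filter_subset _ _)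
  have hydvd := hmem S1 (Finset.filter_subset _ _)
  by_cases ha : (p:ℤ) ∣ a
  · by_cases hc : (p:ℤ) ∣ c
    · -- case 3 : p ∤ b, p ∤ x, p ∤ y
      have hb : ¬ (p:ℤ) ∣ b := by
        intro hb
        have : p ∣ gcd4 a b c d := (dvd_gcd4_iff p a b c d).mpr ⟨ha, hb, hc, hpd⟩
        rw [h] at this
        exact hp.ne_one (Nat.dvd_one.mp this)
      have hpx : ¬ (p:ℤ) ∣ x := by
        rw [hxdvd]; simp only [hS2, Finset.mem_filter]; tauto
      have hpy : ¬ (p:ℤ) ∣ y := by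
        rw [hydvd]; simp only [hS1, Finset.mem_filter]; tauto
      have hbxy : (p:ℤ) ∣ b * (x * y) := by
        have h2 : (p:ℤ) ∣ a * x ^ 2 + c * y ^ 2 :=
          dvd_add (ha.mul_right _) (hc.mul_right _)
        have h3 := dvd_sub hpr h2
        have he : r - (a * x ^ 2 + c * y ^ 2) = b * (x * y) := by rw [hr]; ring
        rwa [he] at h3
      rcases hpp.dvd_mul.mp hbxy with h' | h'
      · exact hb h'
      · rcases hpp.dvd_mul.mp h' with h'' | h''
        · exact hpx h''
        · exact hpy h''
    · -- case 2 : p ∣ x, p ∤ y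
      have hpx : (p:ℤ) ∣ x := by rw [hxdvd]; simp only [hS2, Finset.mem_filter]; tauto
      have hpy : ¬ (p:ℤ) ∣ y := by rw [hydvd]; simp only [hS1, Finset.mem_filter]; tauto
      have : (p:ℤ) ∣ c * y ^ 2 := by
        have h2 : (p:ℤ) ∣ x * (a * x + b * y) := hpx.mul_right _
        have h3 := dvd_sub hpr h2
        have he : r - x * (a * x + b * y) = c * y ^ 2 := by rw [hr]; ring
        rwa [he] at h3
      rcases hpp.dvd_mul.mp this with h' | h'
      · exact hc h'
      · exact hpy (hpp.dvd_of_dvd_pow h')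
  · -- case 1 : p ∣ y, p ∤ x
    have hpy : (p:ℤ) ∣ y := by rw [hydvd]; simp only [hS1, Finset.mem_filter]; tauto
    have hpx : ¬ (p:ℤ) ∣ x := by rw [hxdvd]; simp only [hS2, Finset.mem_filter]; tauto
    have : (p:ℤ) ∣ a * x ^ 2 := by
      have h2 : (p:ℤ) ∣ y * (b * x + c * y) := hpy.mul_right _
      have h3 := dvd_sub hpr h2
      have he : r - y * (b * x + c * y) = a * x ^ 2 := by rw [hr]; ring
      rwa [he] at h3
    rcases hpp.dvd_mul.mp this with h' | h'
    · exact ha h'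
    · exact hpx (hpp.dvd_of_dvd_pow h')

theorem genusChar_fricke (N D D₀ a b c : ℤ) (hN : 0 < N)
    (hD : IsFundamentalDiscriminant D) (hD₀ : IsFundamentalDiscriminant D₀)
    (hcopD : Int.gcd D N = 1) (hcop : Int.gcd D₀ N = 1)
    (hna : N ∣ a) (hdisc : b ^ 2 - 4 * a * c = D * D₀)
    (χ : ℤ × ℤ × ℤ → ℤ) (hχ : IsGenusChar D₀ χ) :
    χ (c * N, -b, a / N) = kronecker D₀ N * χ (a, b, c) := by
  have hD₀0 : D₀ ≠ 0 := by
    intro h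
    subst h
    rcases hD₀ with ⟨h1, h2⟩ | ⟨h1, h2, h3⟩
    · norm_num at h1
    · norm_num at h3
  have hD₀neg1 : D₀ ≠ -1 := by
    intro h
    subst h
    rcases hD₀ with ⟨h1, h2⟩ | ⟨h1, h2, h3⟩
    · norm_num at h1
    · norm_num at h1
  have haN : a / N * N = a := Int.ediv_mul_cancel hna
  have hdvd : D₀ ∣ b ^ 2 - 4 * a * c := by
    rw [hdisc]; exact dvd_mul_left D₀ D
  have hdvd' : D₀ ∣ (-b) ^ 2 - 4 * (c * N) * (a / N) := by
    have he : (-b) ^ 2 - 4 * (c * N) * (a / N) = b ^ 2 - 4 * a * c := by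
      conv_rhs => rw [← haN]
      ring
    rw [he]; exact hdvd
  obtain ⟨hz1, ho1⟩ := hχ a b c hdvd
  obtain ⟨hz2, ho2⟩ := hχ (c * N) (-b) (a / N) hdvd'
  have gcd4_ne : ∀ a b c : ℤ, gcd4 a b c D₀ ≠ 0 := by
    intro a b c h
    have h1 := Nat.eq_zero_of_gcd_eq_zero_right h
    have h2 := Nat.eq_zero_of_gcd_eq_zero_right h1
    exact hD₀0 (Int.natAbs_eq_zero.mp h2)
  have hpN : ∀ p : ℕ, p.Prime → (p:ℤ) ∣ D₀ → ¬ (p:ℤ) ∣ N := by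
    intro p hp hpD hpn
    have hcp : IsCoprime D₀ N := Int.isCoprime_iff_gcd_eq_one.mpr hcop
    have hu : IsUnit (p:ℤ) := hcp.isUnit_of_dvd' hpD hpn
    rcases Int.isUnit_iff.mp hu with h | h
    · exact hp.ne_one (by exact_mod_cast h)
    · omega
  by_cases hg : gcd4 a b c D₀ = 1
  · -- primitive case
    have hgf : gcd4 (c * N) (-b) (a / N) D₀ = 1 := by
      by_contra hgf
      obtain ⟨p, hp, hpd⟩ := Nat.exists_prime_and_dvd hgf
      obtain ⟨h1, h2, h3, h4⟩ := (dvd_gcd4_iff p _ _ _ _).mp hpd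
      have hpp : Prime (p:ℤ) := Nat.prime_iff_prime_int.mp hp
      have hpc : (p:ℤ) ∣ c := (hpp.dvd_mul.mp h1).resolve_right (hpN p hp h4)
      have hpa : (p:ℤ) ∣ a := by rw [← haN]; exact h3.mul_right N
      have : p ∣ gcd4 a b c D₀ :=
        (dvd_gcd4_iff p _ _ _ _).mpr ⟨hpa, (dvd_neg.mp h2), hpc, h4⟩
      rw [hg] at this
      exact hp.ne_one (Nat.dvd_one.mp this)
    obtain ⟨x, y, hxy⟩ := exists_rep_coprime a b c D₀ hD₀0 hg
    set r : ℤ := a * x ^ 2 + b * x * y + c * y ^ 2 with hr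
    have hQ : χ (a, b, c) = kronecker D₀ r := ho1 hg r ⟨x, y, rfl⟩ hxy
    have hrep : (c * N) * (-y) ^ 2 + (-b) * (-y) * (N * x) + (a / N) * (N * x) ^ 2
        = N * r := by
      rw [hr]
      conv_rhs => rw [← haN]
      ring
    have hcop' : Int.gcd (N * r) D₀ = 1 := by
      rw [← Int.isCoprime_iff_gcd_eq_one]
      exact IsCoprime.mul_left
        ((Int.isCoprime_iff_gcd_eq_one.mpr hcop).symm)
        (Int.isCoprime_iff_gcd_eq_one.mpr hxy)
    have hF : χ (c * N, -b, a / N) = kronecker D₀ (N * r) :=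
      ho2 hgf (N * r) ⟨-y, N * x, hrep⟩ hcop'
    by_cases hr0 : r = 0
    · -- then D₀ = ±1, and -1 is excluded
      have hD1 : D₀ = 1 := by
        rw [hr0] at hxy
        have : D₀.natAbs = 1 := by simpa [Int.gcd] using hxy
        rcases Int.natAbs_eq_iff.mp this with h | h
        · simpa using h
        · exact absurd (by simpa using h) hD₀neg1
      subst hD1
      rw [hF, hQ, kronecker_one_left, kronecker_one_left, kronecker_one_left]
      norm_num
    · rw [hF, hQ, kron_mul D₀ N r hN hr0]
  · -- imprimitive case: both sides vanish
    have hg1 : 1 < gcd4 a b c D₀ :=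
      Nat.lt_of_le_of_ne (Nat.pos_of_ne_zero (gcd4_ne a b c)) (Ne.symm hg)
    obtain ⟨p, hp, hpd⟩ := Nat.exists_prime_and_dvd hg
    obtain ⟨h1, h2, h3, h4⟩ := (dvd_gcd4_iff p _ _ _ _).mp hpd
    have hpp : Prime (p:ℤ) := Nat.prime_iff_prime_int.mp hp
    have hpaN : (p:ℤ) ∣ a / N := by
      have : (p:ℤ) ∣ (a / N) * N := by rw [haN]; exact h1
      exact (hpp.dvd_mul.mp this).resolve_right (hpN p hp h4)
    have hpf : p ∣ gcd4 (c * N) (-b) (a / N) D₀ :=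
      (dvd_gcd4_iff p _ _ _ _).mpr ⟨h3.mul_right N, dvd_neg.mpr h2, hpaN, h4⟩
    have hgf1 : 1 < gcd4 (c * N) (-b) (a / N) D₀ :=
      lt_of_lt_of_le hp.one_lt
        (Nat.le_of_dvd (Nat.pos_of_ne_zero (gcd4_ne _ _ _)) hpf)
    rw [hz1 hg1, hz2 hgf1, mul_zero]
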